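/- Let (X, d, μ) be a metric measure space satisfying a lower mass bound μ(B(x, r)) ≥ c_L r^Q for all x ∈ X and 0 < r < 2 diam(X), where Q > 0 and 0 < c_L ≤ 1. Let 1 ≤ p < ∞, 0 < α ≤ Q/p (with α < Q if p = 1), and f ∈ L^p(X) with ‖f‖_{L^p} > 0. Then for every x ∈ X with Mf(x) < ∞, one has M^α f(x) ≤ C ‖f‖_{L^p(X)}^{α p / Q} (Mf(x))^{1 - α p / Q}, where C depends only on c_L, α, Q, p, and M denotes the uncentered Hardy–Littlewood maximal function. -/

import Mathlib

open MeasureTheory Metric Set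

def fracMaxSet {X : Type*} [MetricSpace X] [MeasurableSpace X]
    (μ : Measure X) (α : ℝ) (f : X → ℝ) (x : X) : Set ℝ :=
  {v | ∃ (c : X) (r : ℝ), 0 < r ∧
    ENNReal.ofReal r < 2 * EMetric.diam (Set.univ : Set X) ∧
    x ∈ ball c r ∧ v = r ^ α * ⨍ y in ball c r, |f y| ∂μ}

noncomputable def fracMax {X : Type*} [MetricSpace X] [MeasurableSpace X]
    (μ : Measure X) (α : ℝ) (f : X → ℝ) (x : X) : ℝ :=
  sSup (fracMaxSet μ α f x)

theorem stmt_4 {X : Type*} [MetricSpace X] [MeasurableSpace X]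
    (μ : Measure X) (hball : ∀ (c : X) (r : ℝ), 0 < r → 0 < μ (ball c r) ∧ μ (ball c r) < ⊤)
    (Q c_L : ℝ) (hQ : 0 < Q) (hcL0 : 0 < c_L) (hcL1 : c_L ≤ 1)
    (hlmb : ∀ (x : X) (r : ℝ), 0 < r →
      ENNReal.ofReal r < 2 * EMetric.diam (Set.univ : Set X) →
      ENNReal.ofReal (c_L * r ^ Q) ≤ μ (ball x r))
    (p α : ℝ) (hp : 1 ≤ p) (hα0 : 0 < α) (hαQ : α ≤ Q / p) (hp1 : p = 1 → α < Q) :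
    ∃ C : ℝ, 0 < C ∧ ∀ (f : X → ℝ), MemLp f (ENNReal.ofReal p) μ →
      eLpNorm f (ENNReal.ofReal p) μ ≠ 0 →
      ∀ x : X, BddAbove (fracMaxSet μ 0 f x) →
        fracMax μ α f x ≤
          C * (eLpNorm f (ENNReal.ofReal p) μ).toReal ^ (α * p / Q) *
            (fracMax μ 0 f x) ^ (1 - α * p / Q) := by
  have hp0 : 0 < p := lt_of_lt_of_le one_pos hp
  have hpt : (ENNReal.ofReal p).toReal = p := ENNReal.toReal_ofReal hp0.le
  set θ := α * p / Q with hθdef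
  have hθ0 : 0 < θ := div_pos (mul_pos hα0 hp0) hQ
  have hαpQ : α * p ≤ Q := by
    have := mul_le_mul_of_nonneg_right hαQ hp0.le
    rwa [div_mul_cancel₀ _ hp0.ne'] at this
  have hθ1 : θ ≤ 1 := (div_le_one hQ).mpr hαpQ
  refine ⟨c_L ^ (-(α / Q)), Real.rpow_pos_of_pos hcL0 _, ?_⟩
  intro f hf hfN x hbdd
  set N := (eLpNorm f (ENNReal.ofReal p) μ).toReal with hNdef
  have hN0 : 0 < N := ENNReal.toReal_pos hfN hf.2.ne
  have havg : ∀ (c : X) (r : ℝ), 0 ≤ ⨍ y in ball c r, |f y| ∂μ := by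
    intro c r
    rw [setAverage_eq, smul_eq_mul]
    exact mul_nonneg (by positivity) (integral_nonneg fun y => abs_nonneg _)
  have hM0 : 0 ≤ fracMax μ 0 f x := by
    apply Real.sSup_nonneg
    rintro v ⟨c, r, hr, -, -, rfl⟩
    exact mul_nonneg (Real.rpow_nonneg hr.le _) (havg c r)
  have hRHS : 0 ≤ c_L ^ (-(α / Q)) * N ^ θ * fracMax μ 0 f x ^ (1 - θ) := by
    have := Real.rpow_pos_of_pos hcL0 (-(α / Q))
    positivity
  apply Real.sSup_le _ hRHS
  rintro v ⟨c, r, hr, hrdiam, hx, rfl⟩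
  set A := ⨍ y in ball c r, |f y| ∂μ with hAdef
  have hA0 : 0 ≤ A := havg c r
  have hAM : A ≤ fracMax μ 0 f x :=
    le_csSup hbdd ⟨c, r, hr, hrdiam, hx, by rw [Real.rpow_zero, one_mul]⟩
  have hμB := hball c r hr
  set m := (μ (ball c r)).toReal with hmdef
  have hm0 : 0 < m := ENNReal.toReal_pos hμB.1.ne' hμB.2.ne
  have hcr : c_L * r ^ Q ≤ m :=
    (ENNReal.ofReal_le_iff_le_toReal hμB.2.ne).mp (hlmb c r hr hrdiam)
  -- Hölder step
  have hI : ∫ y in ball c r, |f y| ∂μ ≤ N * m ^ (1 - 1 / p) := by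
    have h1 : ∫ y in ball c r, |f y| ∂μ = (eLpNorm f 1 (μ.restrict (ball c r))).toReal := by
      rw [eLpNorm_one_eq_lintegral_enorm,
        ← integral_norm_eq_lintegral_enorm (hf.1.restrict)]
      simp [Real.norm_eq_abs]
    have h2 : eLpNorm f 1 (μ.restrict (ball c r)) ≤
        eLpNorm f (ENNReal.ofReal p) μ * μ (ball c r) ^ (1 - 1 / p) := by
      have h3 := eLpNorm_le_eLpNorm_mul_rpow_measure_univ (p := 1) (q := ENNReal.ofReal p)
        (ENNReal.one_le_ofReal.mpr hp) (hf.1.restrict (s := ball c r))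
      rw [Measure.restrict_apply_univ, ENNReal.toReal_one, hpt,
        show (1:ℝ)/1 - 1/p = 1 - 1/p from by norm_num] at h3
      exact h3.trans (mul_le_mul_left (eLpNorm_mono_measure f Measure.restrict_le_self) _)
    rw [h1]
    have hfin : eLpNorm f (ENNReal.ofReal p) μ * μ (ball c r) ^ (1 - 1 / p) ≠ ⊤ :=
      ENNReal.mul_ne_top hf.2.ne
        (ENNReal.rpow_ne_top_of_nonneg (by
          have : 1 / p ≤ 1 := by
            rw [div_le_one hp0]; exact hp
          linarith) hμB.2.ne)
    calc (eLpNorm f 1 (μ.restrict (ball c r))).toReal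
        ≤ (eLpNorm f (ENNReal.ofReal p) μ * μ (ball c r) ^ (1 - 1 / p)).toReal :=
          ENNReal.toReal_mono hfin h2
      _ = N * m ^ (1 - 1 / p) := by
          rw [ENNReal.toReal_mul, ← ENNReal.toReal_rpow]
  have hAest : A ≤ N * m ^ (-(1 / p)) := by
    have h4 : A = m⁻¹ * ∫ y in ball c r, |f y| ∂μ := by
      rw [hAdef, setAverage_eq, smul_eq_mul, hmdef]
      rfl
    rw [h4]
    have h5 : m⁻¹ * ∫ y in ball c r, |f y| ∂μ ≤ m⁻¹ * (N * m ^ (1 - 1 / p)) :=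
      mul_le_mul_of_nonneg_left hI (inv_nonneg.mpr hm0.le)
    refine h5.trans_eq ?_
    rw [← Real.rpow_neg_one m, mul_left_comm, ← Real.rpow_add hm0,
      show (-1:ℝ) + (1 - 1/p) = -(1/p) from by ring]
  -- key estimate
  have hkey : r ^ (Q / p) * A ≤ c_L ^ (-(1 / p)) * N := by
    have h6 : m ^ (-(1 / p)) ≤ (c_L * r ^ Q) ^ (-(1 / p)) := by
      apply Real.rpow_le_rpow_of_nonpos (by positivity) hcr
      simp [hp0.le, div_nonneg]
    calc r ^ (Q / p) * A ≤ r ^ (Q / p) * (N * m ^ (-(1 / p))) :=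
          mul_le_mul_of_nonneg_left hAest (Real.rpow_nonneg hr.le _)
      _ ≤ r ^ (Q / p) * (N * (c_L * r ^ Q) ^ (-(1 / p))) := by
          gcongr
      _ = c_L ^ (-(1 / p)) * N := by
          rw [Real.mul_rpow hcL0.le (Real.rpow_nonneg hr.le _), ← Real.rpow_mul hr.le,
            show Q * -(1 / p) = -(Q / p) from by ring,
            show r ^ (Q / p) * (N * (c_L ^ (-(1 / p)) * r ^ (-(Q / p)))) =
              c_L ^ (-(1 / p)) * N * (r ^ (Q / p) * r ^ (-(Q / p))) from by ring,
            ← Real.rpow_add hr]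
          norm_num
  rcases hA0.eq_or_lt with hA | hA
  · rw [← hA, mul_zero]; exact hRHS
  · have hv : r ^ α * A = (r ^ (Q / p) * A) ^ θ * A ^ (1 - θ) := by
      rw [Real.mul_rpow (Real.rpow_nonneg hr.le _) hA0, ← Real.rpow_mul hr.le,
        mul_assoc, ← Real.rpow_add hA, show θ + (1 - θ) = 1 from by ring, Real.rpow_one]
      congr 2
      rw [hθdef]
      field_simp
    calc r ^ α * A = (r ^ (Q / p) * A) ^ θ * A ^ (1 - θ) := hv
      _ ≤ (c_L ^ (-(1 / p)) * N) ^ θ * (fracMax μ 0 f x) ^ (1 - θ) :=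
          mul_le_mul
            (Real.rpow_le_rpow (mul_nonneg (Real.rpow_nonneg hr.le _) hA0) hkey hθ0.le)
            (Real.rpow_le_rpow hA0 hAM (by linarith))
            (Real.rpow_nonneg hA0 _)
            (Real.rpow_nonneg (mul_nonneg (Real.rpow_nonneg hcL0.le _) hN0.le) _)
      _ = c_L ^ (-(α / Q)) * N ^ θ * fracMax μ 0 f x ^ (1 - θ) := by
          rw [Real.mul_rpow (Real.rpow_nonneg hcL0.le _) hN0.le, ← Real.rpow_mul hcL0.le,
            show -(1 / p) * θ = -(α / Q) from by rw [hθdef]; field_simp]
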